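/- Monotonicity of the M-part with respect to the tableau order: if s and t are tableaux of shape λ/μ with values in the ordered graded set [r+s] (where [r] indexes a basis of M and the remaining s indices a basis of N) and s ⊴ t, then κ(s) ⪰ κ(t) in the lexicographic order, where κ(t)_i = μ_i + (number of entries from [r] in row i of t). -/
import Mathlib


open Finset
open scoped Classical

namespace MPart

/-- The cells of the skew diagram `λ/μ` (at most `q` rows, 0-indexed). -/
def cells (q : ℕ) (lam mu : ℕ → ℕ) : Finset (ℕ × ℕ) :=
  ((range q) ×ˢ range ((range q).sup lam)).filter fun p => mu p.1 ≤ p.2 ∧ p.2 < lam p.1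

/-- `t_{p,a}`: the number of entries `≤ a` in the first `p` rows of `t`. -/
noncomputable def cnt (q : ℕ) (lam mu : ℕ → ℕ) (t : ℕ × ℕ → ℕ) (p a : ℕ) : ℕ :=
  ((cells q lam mu).filter fun c => c.1 < p ∧ t c ≤ a).card

/-- The `M`-part of a tableau with values in the graded ordered set
`[r + s'] = {0, …, r + s' - 1}` whose first `r` letters index a basis of `M`:
`κ(t)_i = μ_i + #(entries of row i lying in [r])`. -/
noncomputable def kappa (q : ℕ) (lam mu : ℕ → ℕ) (r : ℕ) (t : ℕ × ℕ → ℕ) : ℕ → ℕ :=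
  fun i => mu i + ((cells q lam mu).filter fun c => c.1 = i ∧ t c < r).card

/-- Lexicographic order `a ⪯ b` on integer sequences. -/
def lexLE (a b : ℕ → ℕ) : Prop :=
  a = b ∨ ∃ i, (∀ j, j < i → a j = b j) ∧ a i < b i

/-- Auxiliary: number of entries `< r` in the first `p` rows. -/
noncomputable def F (q : ℕ) (lam mu : ℕ → ℕ) (r : ℕ) (t : ℕ × ℕ → ℕ) (p : ℕ) : ℕ :=
  ((cells q lam mu).filter fun c => c.1 < p ∧ t c < r).card

lemma F_zero (q : ℕ) (lam mu : ℕ → ℕ) (r : ℕ) (t : ℕ × ℕ → ℕ) :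
    F q lam mu r t 0 = 0 := by
  simp [F]

lemma F_succ (q : ℕ) (lam mu : ℕ → ℕ) (r : ℕ) (t : ℕ × ℕ → ℕ) (i : ℕ) :
    F q lam mu r t (i + 1)
      = F q lam mu r t i + ((cells q lam mu).filter fun c => c.1 = i ∧ t c < r).card := by
  unfold F
  rw [← Finset.card_union_of_disjoint, ← Finset.filter_or]
  · congr 1
    apply Finset.filter_congr
    intro c _
    constructor
    · rintro ⟨h1, h2⟩
      rcases Nat.lt_succ_iff_lt_or_eq.mp h1 with h | h
      · exact Or.inl ⟨h, h2⟩
      · exact Or.inr ⟨h, h2⟩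
    · rintro (⟨h1, h2⟩ | ⟨h1, h2⟩)
      · exact ⟨Nat.lt_succ_of_lt h1, h2⟩
      · exact ⟨by omega, h2⟩
  · rw [Finset.disjoint_left]
    intro c hc hc'
    simp only [Finset.mem_filter] at hc hc'
    omega

lemma F_mono (q : ℕ) (lam mu : ℕ → ℕ) (r : ℕ) (t s : ℕ × ℕ → ℕ)
    (hle : ∀ p a, cnt q lam mu t p a ≤ cnt q lam mu s p a) (p : ℕ) :
    F q lam mu r t p ≤ F q lam mu r s p := by
  cases r with
  | zero => simp [F]
  | succ r' =>
      have h1 : F q lam mu (r' + 1) t p = cnt q lam mu t p r' := by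
        unfold F cnt
        congr 1
        apply Finset.filter_congr
        intro c _
        simp [Nat.lt_succ_iff]
      have h2 : F q lam mu (r' + 1) s p = cnt q lam mu s p r' := by
        unfold F cnt
        congr 1
        apply Finset.filter_congr
        intro c _
        simp [Nat.lt_succ_iff]
      rw [h1, h2]
      exact hle p r'

/-- Monotonicity of the `M`-part, Lemma II.4.4 of ABW.  If `s` and `t`
are tableaux of shape `λ/μ` with values in the ordered set `[r + s']` (first `r`
letters indexing a basis of `M`, the rest a basis of `N`) and `s ⊴ t` (that is,
`s_{p,a} ≥ t_{p,a}` for all `p, a`), then `κ(s) ⪰ κ(t)` in the lexicographic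
order. -/
theorem mpart_monotone
    (q : ℕ) (lam mu : ℕ → ℕ) (r s' : ℕ)
    (t s : ℕ × ℕ → ℕ)
    (ht : ∀ c ∈ cells q lam mu, t c < r + s')
    (hs : ∀ c ∈ cells q lam mu, s c < r + s')
    (hle : ∀ p a, cnt q lam mu t p a ≤ cnt q lam mu s p a) :
    lexLE (kappa q lam mu r t) (kappa q lam mu r s) := by
  by_cases h : ∀ i, kappa q lam mu r t i = kappa q lam mu r s i
  · exact Or.inl (funext h)
  · push_neg at h
    have hne : ∃ i, kappa q lam mu r t i ≠ kappa q lam mu r s i := h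
    right
    refine ⟨Nat.find hne, fun j hj => ?_, ?_⟩
    · by_contra hj'
      exact absurd (Nat.find_min hne hj) (by simpa using hj')
    · set i := Nat.find hne with hi
      have heq : ∀ j < i, kappa q lam mu r t j = kappa q lam mu r s j := by
        intro j hj
        by_contra hj'
        exact absurd (Nat.find_min hne hj) (by simpa using hj')
      have hFeq : F q lam mu r t i = F q lam mu r s i := by
        have : ∀ m, m ≤ i → F q lam mu r t m = F q lam mu r s m := by
          intro m
          induction m with
          | zero => intro _; rw [F_zero, F_zero]
          | succ k ih =>
              intro hk
              have hk' : k < i := Nat.lt_of_succ_le hk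
              have := heq k hk'
              unfold kappa at this
              rw [F_succ, F_succ, ih (le_of_lt hk'), Nat.add_left_cancel this]
        exact this i le_rfl
      have hrow : kappa q lam mu r t i ≤ kappa q lam mu r s i := by
        have h1 := F_mono q lam mu r t s hle (i + 1)
        rw [F_succ, F_succ, hFeq] at h1
        unfold kappa
        omega
      exact lt_of_le_of_ne hrow (Nat.find_spec hne)

end MPart
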